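/- Let k be a field and let A and B be finite-dimensional symmetric k-algebras which are separably equivalent via k-central context bimodules (P, Q, ν, μ). Then A and B are symmetric separably equivalent: there exist a context (P', Q', ν', μ') of left and right finite projective k-central bimodules with ν': P' ⊗_B Q' → A a split A-A-bimodule epimorphism, μ': Q' ⊗_A P' → B a split B-B-bimodule epimorphism, an element Σᵢ q'ᵢ ⊗ p'ᵢ ∈ Q' ⊗_A P' with Σᵢ ν'(p ⊗ q'ᵢ)·p'ᵢ = p and Σᵢ q'ᵢ·ν'(p'ᵢ ⊗ q) = q, and an element Σⱼ pⱼ ⊗ qⱼ ∈ P' ⊗_B Q' with Σⱼ μ'(q ⊗ pⱼ)·qⱼ = q and Σⱼ pⱼ·μ'(qⱼ ⊗ p) = p, for all p ∈ P', q ∈ Q'. -/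

import Mathlib

/-! ### A balanced tensor product of a right module and a left module
over a possibly noncommutative ring, constructed as a quotient of the
`ℤ`-tensor product. -/

open MulOpposite
open scoped TensorProduct

section BalCore

variable (R : Type*) [Ring R] (M : Type*) [AddCommGroup M] [Module Rᵐᵒᵖ M]
  (N : Type*) [AddCommGroup N] [Module R N]

/-- The subgroup of relations defining the balanced tensor product. -/
def balRel : Submodule ℤ (TensorProduct ℤ M N) :=
  Submodule.span ℤ {x | ∃ (m : M) (r : R) (n : N), x = (op r • m) ⊗ₜ[ℤ] n - m ⊗ₜ[ℤ] (r • n)}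

/-- The balanced tensor product `M ⊗[R] N` of a right `R`-module `M` and a
left `R`-module `N`. -/
def Bal : Type _ := TensorProduct ℤ M N ⧸ balRel R M N

noncomputable instance : AddCommGroup (Bal R M N) := Submodule.Quotient.addCommGroup _

variable {M N}

/-- The canonical image of `m ⊗ n` in the balanced tensor product. -/
noncomputable def Bal.tmul (m : M) (n : N) : Bal R M N := Submodule.Quotient.mk (m ⊗ₜ[ℤ] n)

theorem Bal.add_tmul (m m' : M) (n : N) :
    Bal.tmul R (m + m') n = Bal.tmul R m n + Bal.tmul R m' n := by
  show Submodule.Quotient.mk _ = _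
  rw [TensorProduct.add_tmul]
  rfl

theorem Bal.tmul_add (m : M) (n n' : N) :
    Bal.tmul R m (n + n') = Bal.tmul R m n + Bal.tmul R m n' := by
  show Submodule.Quotient.mk _ = _
  rw [TensorProduct.tmul_add]
  rfl

theorem Bal.zero_tmul (n : N) : Bal.tmul R (0 : M) n = 0 := by
  show Submodule.Quotient.mk _ = _
  rw [TensorProduct.zero_tmul]
  rfl

theorem Bal.tmul_zero (m : M) : Bal.tmul R m (0 : N) = 0 := by
  show Submodule.Quotient.mk _ = _
  rw [TensorProduct.tmul_zero]
  rfl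

/-- The fundamental balancing relation `(m · r) ⊗ n = m ⊗ (r · n)`. -/
theorem Bal.op_smul_tmul (m : M) (r : R) (n : N) :
    Bal.tmul R (op r • m) n = Bal.tmul R m (r • n) :=
  (Submodule.Quotient.eq _).2 (Submodule.subset_span ⟨m, r, n, rfl⟩)

theorem Bal.induction_on {C : Bal R M N → Prop} (x : Bal R M N) (zero : C 0)
    (tmul : ∀ m n, C (Bal.tmul R m n)) (add : ∀ x y, C x → C y → C (x + y)) : C x := by
  obtain ⟨y, rfl⟩ := Submodule.Quotient.mk_surjective _ x
  induction y using TensorProduct.induction_on with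
  | zero => exact zero
  | tmul m n => exact tmul m n
  | add a b ha hb =>
      have : (Submodule.Quotient.mk (a + b) : Bal R M N)
          = Submodule.Quotient.mk a + Submodule.Quotient.mk b := rfl
      rw [this]; exact add _ _ ha hb

/-- Lift a balanced biadditive map to the balanced tensor product. -/
noncomputable def Bal.liftFun {T : Type*} [AddCommGroup T] (f : M → N → T)
    (h1 : ∀ m m' n, f (m + m') n = f m n + f m' n)
    (h2 : ∀ m n n', f m (n + n') = f m n + f m n')
    (h3 : ∀ (m : M) (r : R) (n : N), f (op r • m) n = f m (r • n)) : Bal R M N →+ T :=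
  letI f₂ : M →+ N →+ T :=
    AddMonoidHom.mk' (fun m => AddMonoidHom.mk' (f m) (h2 m))
      (fun m m' => AddMonoidHom.ext fun n => h1 m m' n)
  letI bil : M →ₗ[ℤ] N →ₗ[ℤ] T :=
    { toFun := fun m => (f₂ m).toIntLinearMap
      map_add' := fun m m' => LinearMap.ext fun n => by simp
      map_smul' := fun z m => LinearMap.ext fun n => by
        simp [map_zsmul] }
  ((balRel R M N).liftQ (TensorProduct.lift bil) (by
    rw [balRel, Submodule.span_le]
    rintro x ⟨m, r, n, rfl⟩
    simp only [SetLike.mem_coe]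
    show TensorProduct.lift bil ((op r • m) ⊗ₜ[ℤ] n - m ⊗ₜ[ℤ] (r • n)) = 0
    rw [map_sub]
    simp [bil, f₂, h3 m r n])).toAddMonoidHom

@[simp] theorem Bal.liftFun_tmul {T : Type*} [AddCommGroup T] (f : M → N → T)
    (h1 : ∀ m m' n, f (m + m') n = f m n + f m' n)
    (h2 : ∀ m n n', f m (n + n') = f m n + f m n')
    (h3 : ∀ (m : M) (r : R) (n : N), f (op r • m) n = f m (r • n)) (m : M) (n : N) :
    Bal.liftFun R f h1 h2 h3 (Bal.tmul R m n) = f m n := by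
  simp [Bal.liftFun, Bal.tmul, Submodule.Quotient.mk]
  rfl

theorem Bal.addHom_ext {T : Type*} [AddCommGroup T] {f g : Bal R M N →+ T}
    (h : ∀ m n, f (Bal.tmul R m n) = g (Bal.tmul R m n)) : f = g := by
  ext x
  refine Bal.induction_on R (C := fun z => f z = g z) x (by simp) h
    (fun x y hx hy => by simp only [map_add]; rw [hx, hy])

end BalCore
section BalModule

variable (R : Type*) [Ring R] {M : Type*} [AddCommGroup M] [Module Rᵐᵒᵖ M]
  {N : Type*} [AddCommGroup N] [Module R N]

section Left

variable {S : Type*} [Ring S] [Module S M] [SMulCommClass S Rᵐᵒᵖ M]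

/-- The left action on the balanced tensor product through the first factor. -/
noncomputable def Bal.lsmulHom (s : S) : Bal R M N →+ Bal R M N :=
  Bal.liftFun R (fun m n => Bal.tmul R (s • m) n)
    (fun m m' n => by
      show Bal.tmul R (s • (m + m')) n = Bal.tmul R (s • m) n + Bal.tmul R (s • m') n
      rw [smul_add, Bal.add_tmul])
    (fun m n n' => Bal.tmul_add R _ n n')
    (fun m r n => by
      show Bal.tmul R (s • op r • m) n = Bal.tmul R (s • m) (r • n)
      rw [smul_comm, Bal.op_smul_tmul])

theorem Bal.lsmulHom_tmul (s : S) (m : M) (n : N) :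
    Bal.lsmulHom R (M := M) (N := N) s (Bal.tmul R m n) = Bal.tmul R (s • m) n :=
  Bal.liftFun_tmul R _ _ _ _ m n

noncomputable instance : SMul S (Bal R M N) := ⟨fun s x => Bal.lsmulHom R s x⟩

theorem Bal.lsmul_tmul (s : S) (m : M) (n : N) :
    s • Bal.tmul R m n = Bal.tmul R (s • m) n :=
  Bal.lsmulHom_tmul R s m n

theorem Bal.lsmul_one : Bal.lsmulHom R (M := M) (N := N) (1 : S) = AddMonoidHom.id _ :=
  Bal.addHom_ext R fun m n => by
    rw [Bal.lsmulHom_tmul, one_smul, AddMonoidHom.id_apply]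

theorem Bal.lsmul_mul (s t : S) :
    Bal.lsmulHom R (M := M) (N := N) (s * t) = (Bal.lsmulHom R s).comp (Bal.lsmulHom R t) :=
  Bal.addHom_ext R fun m n => by
    rw [AddMonoidHom.comp_apply, Bal.lsmulHom_tmul, Bal.lsmulHom_tmul, Bal.lsmulHom_tmul,
      mul_smul]

theorem Bal.lsmul_addsmul (s t : S) :
    Bal.lsmulHom R (M := M) (N := N) (s + t) = Bal.lsmulHom R s + Bal.lsmulHom R t :=
  Bal.addHom_ext R fun m n => by
    rw [AddMonoidHom.add_apply, Bal.lsmulHom_tmul, Bal.lsmulHom_tmul, Bal.lsmulHom_tmul,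
      add_smul, Bal.add_tmul]

theorem Bal.lsmul_zerosmul : Bal.lsmulHom R (M := M) (N := N) (0 : S) = 0 :=
  Bal.addHom_ext R fun m n => by
    rw [Bal.lsmulHom_tmul, zero_smul, Bal.zero_tmul, AddMonoidHom.zero_apply]

noncomputable instance : Module S (Bal R M N) where
  one_smul x := DFunLike.congr_fun (Bal.lsmul_one R (M := M) (N := N) (S := S)) x
  mul_smul s t x := DFunLike.congr_fun (Bal.lsmul_mul R s t) x
  smul_zero s := (Bal.lsmulHom R (M := M) (N := N) s).map_zero
  smul_add s x y := (Bal.lsmulHom R s).map_add x y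
  add_smul s t x := DFunLike.congr_fun (Bal.lsmul_addsmul R s t) x
  zero_smul x := DFunLike.congr_fun (Bal.lsmul_zerosmul R (M := M) (N := N) (S := S)) x

end Left

section Right

variable {S : Type*} [Ring S] [Module Sᵐᵒᵖ N] [SMulCommClass R Sᵐᵒᵖ N]

/-- The right action on the balanced tensor product through the second factor. -/
noncomputable def Bal.rsmulHom (s : Sᵐᵒᵖ) : Bal R M N →+ Bal R M N :=
  Bal.liftFun R (fun m n => Bal.tmul R m (s • n))
    (fun m m' n => Bal.add_tmul R m m' _)
    (fun m n n' => by
      show Bal.tmul R m (s • (n + n')) = Bal.tmul R m (s • n) + Bal.tmul R m (s • n')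
      rw [smul_add, Bal.tmul_add])
    (fun m r n => by
      show Bal.tmul R (op r • m) (s • n) = Bal.tmul R m (s • r • n)
      rw [Bal.op_smul_tmul, smul_comm])

theorem Bal.rsmulHom_tmul (s : Sᵐᵒᵖ) (m : M) (n : N) :
    Bal.rsmulHom R (M := M) (N := N) s (Bal.tmul R m n) = Bal.tmul R m (s • n) :=
  Bal.liftFun_tmul R _ _ _ _ m n

noncomputable instance : SMul Sᵐᵒᵖ (Bal R M N) := ⟨fun s x => Bal.rsmulHom R s x⟩

theorem Bal.rsmul_tmul (s : Sᵐᵒᵖ) (m : M) (n : N) :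
    s • Bal.tmul R m n = Bal.tmul R m (s • n) :=
  Bal.rsmulHom_tmul R s m n

theorem Bal.rsmul_one : Bal.rsmulHom R (M := M) (N := N) (1 : Sᵐᵒᵖ) = AddMonoidHom.id _ :=
  Bal.addHom_ext R fun m n => by
    rw [Bal.rsmulHom_tmul, one_smul, AddMonoidHom.id_apply]

theorem Bal.rsmul_mul (s t : Sᵐᵒᵖ) :
    Bal.rsmulHom R (M := M) (N := N) (s * t) = (Bal.rsmulHom R s).comp (Bal.rsmulHom R t) :=
  Bal.addHom_ext R fun m n => by
    rw [AddMonoidHom.comp_apply, Bal.rsmulHom_tmul, Bal.rsmulHom_tmul, Bal.rsmulHom_tmul,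
      mul_smul]

theorem Bal.rsmul_addsmul (s t : Sᵐᵒᵖ) :
    Bal.rsmulHom R (M := M) (N := N) (s + t) = Bal.rsmulHom R s + Bal.rsmulHom R t :=
  Bal.addHom_ext R fun m n => by
    rw [AddMonoidHom.add_apply, Bal.rsmulHom_tmul, Bal.rsmulHom_tmul, Bal.rsmulHom_tmul,
      add_smul, Bal.tmul_add]

theorem Bal.rsmul_zerosmul : Bal.rsmulHom R (M := M) (N := N) (0 : Sᵐᵒᵖ) = 0 :=
  Bal.addHom_ext R fun m n => by
    rw [Bal.rsmulHom_tmul, zero_smul, Bal.tmul_zero, AddMonoidHom.zero_apply]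

noncomputable instance : Module Sᵐᵒᵖ (Bal R M N) where
  one_smul x := DFunLike.congr_fun (Bal.rsmul_one R (M := M) (N := N) (S := S)) x
  mul_smul s t x := DFunLike.congr_fun (Bal.rsmul_mul R s t) x
  smul_zero s := (Bal.rsmulHom R (M := M) (N := N) s).map_zero
  smul_add s x y := (Bal.rsmulHom R s).map_add x y
  add_smul s t x := DFunLike.congr_fun (Bal.rsmul_addsmul R s t) x
  zero_smul x := DFunLike.congr_fun (Bal.rsmul_zerosmul R (M := M) (N := N) (S := S)) x

end Right

end BalModule

universe u

set_option linter.unusedSectionVars false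
set_option maxHeartbeats 1000000

section SymSepAux

variable {k : Type*} [Field k] {A B : Type u} [Ring A] [Algebra k A] [Ring B] [Algebra k B]
variable {P : Type u} [AddCommGroup P] [Module A P] [Module Bᵐᵒᵖ P]
  [SMulCommClass A Bᵐᵒᵖ P] [Module k P] [IsScalarTower k A P] [IsScalarTower k Bᵐᵒᵖ P]

/-- Existence of a finite dual basis for a finitely generated projective module. -/
theorem SS.exists_dual_basis (R : Type*) (M : Type*) [Ring R] [AddCommGroup M] [Module R M]
    [Module.Finite R M] [Module.Projective R M] :
    ∃ (n : ℕ) (x : Fin n → M) (g : Fin n → (M →ₗ[R] R)), ∀ p, ∑ i, g i p • x i = p := by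
  obtain ⟨n, s, hs⟩ := Module.Finite.exists_fin (R := R) (M := M)
  let π : (Fin n → R) →ₗ[R] M :=
    { toFun := fun c => ∑ i, c i • s i
      map_add' := fun c d => by simp [add_smul, Finset.sum_add_distrib]
      map_smul' := fun r c => by simp [mul_smul, Finset.smul_sum] }
  have hπ : Function.Surjective π := by
    rw [← LinearMap.range_eq_top, ← top_le_iff, ← hs, Submodule.span_le]
    rintro _ ⟨i, rfl⟩
    exact ⟨Pi.single i 1, by simp [π, Pi.single_apply, Finset.sum_ite_eq']⟩
  obtain ⟨σ, hσ⟩ := Module.projective_lifting_property π LinearMap.id hπ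
  refine ⟨n, s, fun i => (LinearMap.proj i).comp σ, fun p => ?_⟩
  have := congrArg (fun f => f p) hσ
  simpa [π] using this

/-- The domain action of `B` on `P →ₗ[A] A`, `(b • g) p = g (p · b)`. -/
noncomputable def SS.bSmul (b : B) (g : P →ₗ[A] A) : P →ₗ[A] A where
  toFun p := g (op b • p)
  map_add' p q := by simp only [smul_add, map_add]
  map_smul' a p := by
    simp only [RingHom.id_apply]; rw [← smul_comm a (op b) p, map_smul]

noncomputable instance SS.moduleB : Module B (P →ₗ[A] A) where
  smul := SS.bSmul
  one_smul g := by ext p; show g (op (1:B) • p) = g p; rw [op_one, one_smul]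
  mul_smul b b' g := by
    ext p
    show g (op (b * b') • p) = g (op b' • op b • p)
    rw [← mul_smul, ← op_mul]
  smul_zero b := by ext p; rfl
  smul_add b g g' := by ext p; rfl
  add_smul b b' g := by
    ext p
    show g (op (b + b') • p) = g (op b • p) + g (op b' • p)
    rw [op_add, add_smul, map_add]
  zero_smul g := by
    ext p
    show g (op (0:B) • p) = 0
    rw [op_zero, zero_smul, map_zero]

theorem SS.bSmul_apply (b : B) (g : P →ₗ[A] A) (p : P) :
    (b • g) p = g (op b • p) := rfl

theorem SS.opSmul_apply (a : A) (g : P →ₗ[A] A) (p : P) :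
    (op a • g) p = g p * a := rfl

instance SS.smulCommBA : SMulCommClass B Aᵐᵒᵖ (P →ₗ[A] A) where
  smul_comm b a g := by ext p; rfl

instance SS.towerkB : IsScalarTower k B (P →ₗ[A] A) where
  smul_assoc c b g := by
    ext p
    show g (op (c • b) • p) = c • g (op b • p)
    have h1 : op (c • b) • p = c • (op b • p) := by
      rw [op_smul]; exact smul_assoc c (op b) p
    rw [h1, ← algebraMap_smul A c, map_smul, algebraMap_smul]

omit [Module Bᵐᵒᵖ P] [SMulCommClass A Bᵐᵒᵖ P] [IsScalarTower k Bᵐᵒᵖ P] in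
/-- A module map `P →ₗ[A] A` is `k`-linear. -/
theorem SS.glin (g : P →ₗ[A] A) (c : k) (x : P) : g (c • x) = c • g x := by
  rw [← algebraMap_smul A c x, map_smul, algebraMap_smul]

end SymSepAux

section SymSepAux2

variable {k : Type*} [Field k] {A B : Type u} [Ring A] [Algebra k A] [Ring B] [Algebra k B]
variable {P : Type u} [AddCommGroup P] [Module A P] [Module Bᵐᵒᵖ P]
  [SMulCommClass A Bᵐᵒᵖ P] [Module k P] [IsScalarTower k A P] [IsScalarTower k Bᵐᵒᵖ P]

theorem SS.e_eq3 {R : Type*} [Ring R] [Algebra k R] (e : R ≃ₗ[k] Module.Dual k R)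
    (h3 : ∀ a x y : R, e (a * x) y = e x (y * a)) (x y : R) : e x y = e 1 (y * x) := by
  have := h3 x 1 y; rwa [mul_one] at this

theorem SS.e_eq4 {R : Type*} [Ring R] [Algebra k R] (e : R ≃ₗ[k] Module.Dual k R)
    (h4 : ∀ a x y : R, e (x * a) y = e x (a * y)) (x y : R) : e x y = e 1 (x * y) := by
  have := h4 x 1 y; rwa [one_mul] at this

theorem SS.e_tr {R : Type*} [Ring R] [Algebra k R] (e : R ≃ₗ[k] Module.Dual k R)
    (h3 : ∀ a x y : R, e (a * x) y = e x (y * a))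
    (h4 : ∀ a x y : R, e (x * a) y = e x (a * y)) (x y : R) :
    e 1 (x * y) = e 1 (y * x) := by
  rw [← SS.e_eq4 e h4 x y, SS.e_eq3 e h3 x y]

theorem SS.e_lam {R : Type*} [Ring R] [Algebra k R] (e : R ≃ₗ[k] Module.Dual k R)
    (h3 : ∀ a x y : R, e (a * x) y = e x (y * a)) (x : R) : e 1 x = e x 1 := by
  rw [SS.e_eq3 e h3 x 1, one_mul]

variable (eA : A ≃ₗ[k] Module.Dual k A) (eB : B ≃ₗ[k] Module.Dual k B)

/-- The functional `b ↦ λ_A (g (p · b))` used to define `μ'`. -/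
noncomputable def SS.Efun (g : P →ₗ[A] A) (p : P) : Module.Dual k B where
  toFun b := eA 1 (g (op b • p))
  map_add' b b' := by
    show eA 1 (g (op (b + b') • p)) = eA 1 (g (op b • p)) + eA 1 (g (op b' • p))
    rw [op_add, add_smul, map_add, map_add]
  map_smul' c b := by
    show eA 1 (g (op (c • b) • p)) = c • eA 1 (g (op b • p))
    rw [op_smul, smul_assoc, SS.glin, map_smul]

theorem SS.Efun_apply (g : P →ₗ[A] A) (p : P) (b : B) :
    SS.Efun eA g p b = eA 1 (g (op b • p)) := rfl

/-- The inner functional `a ↦ λ_B (f (a • p))` of the dualization map. -/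
noncomputable def SS.DzI (f : P →ₗ[k] B) (p : P) : Module.Dual k A where
  toFun a := eB 1 (f (a • p))
  map_add' a a' := by
    show eB 1 (f ((a + a') • p)) = eB 1 (f (a • p)) + eB 1 (f (a' • p))
    rw [add_smul, map_add, map_add]
  map_smul' c a := by
    show eB 1 (f ((c • a) • p)) = c • eB 1 (f (a • p))
    rw [smul_assoc, map_smul, map_smul]

theorem SS.DzI_apply (f : P →ₗ[k] B) (p : P) (a : A) :
    SS.DzI eB f p a = eB 1 (f (a • p)) := rfl

/-- Dualization: turn a right-`B`-linear map `P → B` into a left-`A`-linear map `P → A`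
using the symmetric structures. -/
noncomputable def SS.Dz (hA3 : ∀ a x y : A, eA (a * x) y = eA x (y * a))
    (f : P →ₗ[k] B) : P →ₗ[A] A where
  toFun p := eA.symm (SS.DzI eB f p)
  map_add' p p' := by
    have h : SS.DzI (A := A) eB f (p + p') = SS.DzI (A := A) eB f p + SS.DzI (A := A) eB f p' := by
      ext a
      show eB 1 (f (a • (p + p'))) = eB 1 (f (a • p)) + eB 1 (f (a • p'))
      rw [smul_add, map_add, map_add]
    show eA.symm (SS.DzI eB f (p + p')) = eA.symm (SS.DzI eB f p) + eA.symm (SS.DzI eB f p')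
    rw [h, map_add]
  map_smul' a' p := by
    simp only [RingHom.id_apply]
    apply eA.injective
    rw [LinearEquiv.apply_symm_apply]
    ext a
    rw [smul_eq_mul, hA3, LinearEquiv.apply_symm_apply]
    show eB 1 (f (a • a' • p)) = eB 1 (f ((a * a') • p))
    rw [mul_smul]

theorem SS.eA_Dz (hA3 : ∀ a x y : A, eA (a * x) y = eA x (y * a))
    (f : P →ₗ[k] B) (p : P) : eA (SS.Dz eA eB hA3 f p) = SS.DzI eB f p :=
  eA.apply_symm_apply _

theorem SS.Dz_bsmul (hA3 : ∀ a x y : A, eA (a * x) y = eA x (y * a))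
    (trB : ∀ x y : B, eB 1 (x * y) = eB 1 (y * x))
    (f f' : P →ₗ[k] B) (hf : ∀ (b : B) (x : P), f (op b • x) = f x * b)
    (b : B) (hff' : ∀ x, f' x = b * f x) :
    SS.Dz eA eB hA3 f' = b • SS.Dz eA eB hA3 f := by
  ext p
  rw [SS.bSmul_apply]
  show eA.symm (SS.DzI eB f' p) = eA.symm (SS.DzI eB f (op b • p))
  congr 1
  ext a
  rw [SS.DzI_apply, SS.DzI_apply, hff', smul_comm a (op b) p, hf, trB]

theorem SS.Dz_opsmul (hA3 : ∀ a x y : A, eA (a * x) y = eA x (y * a))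
    (hA4 : ∀ a x y : A, eA (x * a) y = eA x (a * y))
    (f f' : P →ₗ[k] B) (a' : A) (hff' : ∀ x, f' x = f (a' • x)) :
    SS.Dz eA eB hA3 f' = op a' • SS.Dz eA eB hA3 f := by
  ext p
  rw [SS.opSmul_apply]
  apply eA.injective
  rw [SS.eA_Dz]
  ext a
  rw [SS.DzI_apply, hff', hA4, SS.eA_Dz, SS.DzI_apply]
  rw [← mul_smul]

theorem SS.Dz_add (hA3 : ∀ a x y : A, eA (a * x) y = eA x (y * a))
    (f f' f'' : P →ₗ[k] B) (hff' : ∀ x, f'' x = f x + f' x) :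
    SS.Dz eA eB hA3 f'' = SS.Dz eA eB hA3 f + SS.Dz eA eB hA3 f' := by
  ext p
  show eA.symm (SS.DzI eB f'' p) = eA.symm (SS.DzI eB f p) + eA.symm (SS.DzI eB f' p)
  rw [← map_add]
  congr 1
  ext a
  simp only [SS.DzI_apply, LinearMap.add_apply, hff', map_add]

end SymSepAux2

section BlSection
variable {k : Type*} [Field k] {B : Type u} [Ring B] [Algebra k B]
variable {P : Type u} [AddCommGroup P] [Module Bᵐᵒᵖ P] [Module k P] [IsScalarTower k Bᵐᵒᵖ P]

/-- The right-`B`-linear map `P → B` associated to a `Bᵐᵒᵖ`-linear functional. -/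
noncomputable def SS.bl (h : P →ₗ[Bᵐᵒᵖ] Bᵐᵒᵖ) : P →ₗ[k] B where
  toFun x := unop (h x)
  map_add' x y := by
    show unop (h (x + y)) = unop (h x) + unop (h y)
    rw [map_add, unop_add]
  map_smul' c x := by
    show unop (h (c • x)) = c • unop (h x)
    rw [← algebraMap_smul (R := k) Bᵐᵒᵖ c x, h.map_smul (algebraMap k Bᵐᵒᵖ c) x,
      algebraMap_smul (R := k) Bᵐᵒᵖ c (h x), unop_smul]

theorem SS.bl_apply (h : P →ₗ[Bᵐᵒᵖ] Bᵐᵒᵖ) (x : P) : SS.bl (k := k) h x = unop (h x) := rfl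

theorem SS.bl_opsmul (h : P →ₗ[Bᵐᵒᵖ] Bᵐᵒᵖ) (b : B) (x : P) :
    SS.bl (k := k) h (op b • x) = SS.bl (k := k) h x * b := by
  show unop (h (op b • x)) = unop (h x) * b
  rw [h.map_smul (op b) x, smul_eq_mul, unop_mul, unop_op]

end BlSection

section SymSepAux3

variable {k : Type*} [Field k] {A B : Type u} [Ring A] [Algebra k A] [Ring B] [Algebra k B]
variable {P : Type u} [AddCommGroup P] [Module A P] [Module Bᵐᵒᵖ P]
  [SMulCommClass A Bᵐᵒᵖ P] [Module k P] [IsScalarTower k A P] [IsScalarTower k Bᵐᵒᵖ P]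
variable (eA : A ≃ₗ[k] Module.Dual k A) (eB : B ≃ₗ[k] Module.Dual k B)

/-- The bimodule map `μ' : Q' ⊗_A P → B` built from the symmetric structures. -/
noncomputable def SS.muMap (trA : ∀ x y : A, eA 1 (x * y) = eA 1 (y * x)) :
    Bal A (P →ₗ[A] A) P →+ B :=
  Bal.liftFun A (fun g p => eB.symm (SS.Efun eA g p))
    (fun g g' p => by
      show eB.symm (SS.Efun eA (g + g') p) = eB.symm (SS.Efun eA g p) + eB.symm (SS.Efun eA g' p)
      rw [← map_add]
      refine congrArg _ ?_
      ext b
      simp only [SS.Efun_apply, LinearMap.add_apply, map_add])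
    (fun g p p' => by
      show eB.symm (SS.Efun eA g (p + p')) = eB.symm (SS.Efun eA g p) + eB.symm (SS.Efun eA g p')
      rw [← map_add]
      refine congrArg _ ?_
      ext b
      simp only [SS.Efun_apply, LinearMap.add_apply, smul_add, map_add])
    (fun g a p => by
      show eB.symm (SS.Efun eA (op a • g) p) = eB.symm (SS.Efun eA g (a • p))
      refine congrArg _ ?_
      ext b
      rw [SS.Efun_apply, SS.Efun_apply, SS.opSmul_apply, ← smul_comm a (op b) p,
        g.map_smul a (op b • p), smul_eq_mul, trA])

theorem SS.muMap_tmul (trA : ∀ x y : A, eA 1 (x * y) = eA 1 (y * x))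
    (g : P →ₗ[A] A) (p : P) :
    SS.muMap eA eB trA (Bal.tmul A g p) = eB.symm (SS.Efun eA g p) :=
  Bal.liftFun_tmul A _ _ _ _ g p

theorem SS.eB_muMap_tmul (trA : ∀ x y : A, eA 1 (x * y) = eA 1 (y * x))
    (g : P →ₗ[A] A) (p : P) (b : B) :
    eB (SS.muMap eA eB trA (Bal.tmul A g p)) b = eA 1 (g (op b • p)) := by
  rw [SS.muMap_tmul, eB.apply_symm_apply, SS.Efun_apply]

theorem SS.muMap_bsmul_tmul (trA : ∀ x y : A, eA 1 (x * y) = eA 1 (y * x))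
    (hB3 : ∀ b x y : B, eB (b * x) y = eB x (y * b))
    (b' : B) (g : P →ₗ[A] A) (p : P) :
    SS.muMap eA eB trA (Bal.tmul A (b' • g) p) = b' * SS.muMap eA eB trA (Bal.tmul A g p) := by
  apply eB.injective; ext b
  rw [SS.eB_muMap_tmul, SS.bSmul_apply, ← mul_smul, ← op_mul, hB3, SS.eB_muMap_tmul]

theorem SS.muMap_opsmul_tmul (trA : ∀ x y : A, eA 1 (x * y) = eA 1 (y * x))
    (hB4 : ∀ b x y : B, eB (x * b) y = eB x (b * y))
    (b' : B) (g : P →ₗ[A] A) (p : P) :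
    SS.muMap eA eB trA (Bal.tmul A g (op b' • p)) = SS.muMap eA eB trA (Bal.tmul A g p) * b' := by
  apply eB.injective; ext b
  rw [SS.eB_muMap_tmul, ← mul_smul, ← op_mul, hB4, SS.eB_muMap_tmul]

theorem SS.muMap_tmul_Dz (hA3 : ∀ a x y : A, eA (a * x) y = eA x (y * a))
    (hB4 : ∀ b x y : B, eB (x * b) y = eB x (b * y))
    (trA : ∀ x y : A, eA 1 (x * y) = eA 1 (y * x))
    (f : P →ₗ[k] B) (hf : ∀ (b : B) (x : P), f (op b • x) = f x * b) (p : P) :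
    SS.muMap eA eB trA (Bal.tmul A (SS.Dz eA eB hA3 f) p) = f p := by
  apply eB.injective; ext b
  rw [SS.eB_muMap_tmul, SS.e_lam eA hA3, SS.eA_Dz, SS.DzI_apply, one_smul, hf,
    SS.e_eq4 eB hB4 (f p) b]

theorem SS.cond2nu {n : ℕ} (pA : Fin n → P) (gA : Fin n → (P →ₗ[A] A))
    (hdbA : ∀ p, ∑ i, gA i p • pA i = p) (g : P →ₗ[A] A) :
    ∑ i, op (g (pA i)) • gA i = g := by
  ext p
  rw [LinearMap.sum_apply]
  conv_rhs => rw [← hdbA p, map_sum]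
  refine Finset.sum_congr rfl fun i _ => ?_
  rw [SS.opSmul_apply, map_smul, smul_eq_mul]

theorem SS.cond1mu (hA3 : ∀ a x y : A, eA (a * x) y = eA x (y * a))
    (hB4 : ∀ b x y : B, eB (x * b) y = eB x (b * y))
    (trA : ∀ x y : A, eA 1 (x * y) = eA 1 (y * x))
    (trB : ∀ x y : B, eB 1 (x * y) = eB 1 (y * x))
    {m : ℕ} (xB : Fin m → P) (hOB : Fin m → (P →ₗ[Bᵐᵒᵖ] Bᵐᵒᵖ))
    (hdbB : ∀ p, ∑ j, hOB j p • xB j = p) (g : P →ₗ[A] A) :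
    ∑ j, SS.muMap eA eB trA (Bal.tmul A g (xB j)) • SS.Dz eA eB hA3 (SS.bl (k := k) (hOB j)) = g := by
  ext p
  rw [LinearMap.sum_apply]
  apply eA.injective
  rw [map_sum]
  ext a
  rw [LinearMap.sum_apply]
  have hterm : ∀ j, eA ((SS.muMap eA eB trA (Bal.tmul A g (xB j)) •
      SS.Dz eA eB hA3 (SS.bl (k := k) (hOB j))) p) a = eA 1 (g ((hOB j (a • p)) • xB j)) := by
    intro j
    set c := SS.muMap eA eB trA (Bal.tmul A g (xB j)) with hc
    have h1 : (c • SS.Dz eA eB hA3 (SS.bl (k := k) (hOB j))) p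
        = SS.Dz eA eB hA3 (SS.bl (k := k) (hOB j)) (op c • p) := rfl
    rw [h1, SS.eA_Dz, SS.DzI_apply, smul_comm a (op c) p, SS.bl_opsmul, trB,
      ← SS.e_eq4 eB hB4, hc, SS.eB_muMap_tmul, SS.bl_apply, op_unop]
  rw [Finset.sum_congr rfl fun j _ => hterm j]
  rw [← map_sum, ← map_sum]
  have : ∑ j, (hOB j (a • p)) • xB j = a • p := hdbB (a • p)
  rw [this, map_smul, smul_eq_mul, SS.e_eq3 eA hA3 (g p) a]

end SymSepAux3



/-- Over a field `k`, a separable equivalence between finite-dimensional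
symmetric `k`-algebras `A` and `B` (via `k`-central context bimodules) is a symmetric
separable equivalence: there is a context `(P', Q', ν', μ')` of left and right finite
projective `k`-central bimodules with `ν'`, `μ'` split bimodule epimorphisms admitting
adjunction elements on both sides. -/
theorem separable_equivalence_of_symmetric_algebras_is_symmetric
    {k : Type*} {A B P Q : Type u} [Field k] [Ring A] [Algebra k A] [Ring B] [Algebra k B]
    [FiniteDimensional k A] [FiniteDimensional k B]
    -- `A` and `B` are symmetric algebras
    (hA : ∃ φ : A →ₗ[k] Module.Dual k A, Function.Bijective φ ∧
      (∀ a x y : A, φ (a * x) y = φ x (y * a)) ∧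
      (∀ a x y : A, φ (x * a) y = φ x (a * y)))
    (hB : ∃ ψ : B →ₗ[k] Module.Dual k B, Function.Bijective ψ ∧
      (∀ b x y : B, ψ (b * x) y = ψ x (y * b)) ∧
      (∀ b x y : B, ψ (x * b) y = ψ x (b * y)))
    -- a separable equivalence between `A` and `B` via `k`-central context bimodules
    [AddCommGroup P] [Module A P] [Module Bᵐᵒᵖ P] [SMulCommClass A Bᵐᵒᵖ P]
    [Module k P] [IsScalarTower k A P] [IsScalarTower k Bᵐᵒᵖ P]
    [AddCommGroup Q] [Module B Q] [Module Aᵐᵒᵖ Q] [SMulCommClass B Aᵐᵒᵖ Q]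
    [Module k Q] [IsScalarTower k B Q] [IsScalarTower k Aᵐᵒᵖ Q]
    [Module.Finite A P] [Module.Projective A P]
    [Module.Finite Bᵐᵒᵖ P] [Module.Projective Bᵐᵒᵖ P]
    [Module.Finite B Q] [Module.Projective B Q]
    [Module.Finite Aᵐᵒᵖ Q] [Module.Projective Aᵐᵒᵖ Q]
    (ν : Bal B P Q →+ A)
    (hνl : ∀ (a : A) (x : Bal B P Q), ν (a • x) = a * ν x)
    (hνr : ∀ (a : A) (x : Bal B P Q), ν (op a • x) = ν x * a)
    (hνsurj : Function.Surjective ν)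
    (hνsplit : ∃ σ : A →+ Bal B P Q,
      (∀ (a c : A), σ (a * c) = a • σ c) ∧ (∀ (a c : A), σ (c * a) = op a • σ c) ∧
      ∀ a : A, ν (σ a) = a)
    (μ : Bal A Q P →+ B)
    (hμl : ∀ (b : B) (y : Bal A Q P), μ (b • y) = b * μ y)
    (hμr : ∀ (b : B) (y : Bal A Q P), μ (op b • y) = μ y * b)
    (hμsurj : Function.Surjective μ)
    (hμsplit : ∃ τ : B →+ Bal A Q P,
      (∀ (b c : B), τ (b * c) = b • τ c) ∧ (∀ (b c : B), τ (c * b) = op b • τ c) ∧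
      ∀ b : B, μ (τ b) = b) :
    ∃ (P' : Type u) (_ : AddCommGroup P') (_ : Module A P') (_ : Module Bᵐᵒᵖ P')
      (_ : SMulCommClass A Bᵐᵒᵖ P') (_ : Module k P') (_ : IsScalarTower k A P')
      (_ : IsScalarTower k Bᵐᵒᵖ P')
      (Q' : Type u) (_ : AddCommGroup Q') (_ : Module B Q') (_ : Module Aᵐᵒᵖ Q')
      (_ : SMulCommClass B Aᵐᵒᵖ Q') (_ : Module k Q') (_ : IsScalarTower k B Q')
      (_ : IsScalarTower k Aᵐᵒᵖ Q'),
      Module.Finite A P' ∧ Module.Projective A P' ∧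
      Module.Finite Bᵐᵒᵖ P' ∧ Module.Projective Bᵐᵒᵖ P' ∧
      Module.Finite B Q' ∧ Module.Projective B Q' ∧
      Module.Finite Aᵐᵒᵖ Q' ∧ Module.Projective Aᵐᵒᵖ Q' ∧
      ∃ ν' : Bal B P' Q' →+ A,
        (∀ (a : A) (x : Bal B P' Q'), ν' (a • x) = a * ν' x) ∧
        (∀ (a : A) (x : Bal B P' Q'), ν' (op a • x) = ν' x * a) ∧
        Function.Surjective ν' ∧
        (∃ σ : A →+ Bal B P' Q',
          (∀ (a c : A), σ (a * c) = a • σ c) ∧ (∀ (a c : A), σ (c * a) = op a • σ c) ∧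
          ∀ a : A, ν' (σ a) = a) ∧
        ∃ μ' : Bal A Q' P' →+ B,
          (∀ (b : B) (y : Bal A Q' P'), μ' (b • y) = b * μ' y) ∧
          (∀ (b : B) (y : Bal A Q' P'), μ' (op b • y) = μ' y * b) ∧
          Function.Surjective μ' ∧
          (∃ τ : B →+ Bal A Q' P',
            (∀ (b c : B), τ (b * c) = b • τ c) ∧ (∀ (b c : B), τ (c * b) = op b • τ c) ∧
            ∀ b : B, μ' (τ b) = b) ∧
          (∃ (n : ℕ) (q' : Fin n → Q') (p' : Fin n → P'),
            (∀ p : P', ∑ i, ν' (Bal.tmul B p (q' i)) • p' i = p) ∧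
            (∀ q : Q', ∑ i, op (ν' (Bal.tmul B (p' i) q)) • q' i = q)) ∧
          (∃ (m : ℕ) (pj : Fin m → P') (qj : Fin m → Q'),
            (∀ q : Q', ∑ j, μ' (Bal.tmul A q (pj j)) • qj j = q) ∧
            (∀ p : P', ∑ j, op (μ' (Bal.tmul A (qj j) p)) • pj j = p)) := by
  classical
  obtain ⟨φ, hφbij, hφ3, hφ4⟩ := hA
  obtain ⟨ψ, hψbij, hψ3, hψ4⟩ := hB
  obtain ⟨σ, hσl, hσr, hσν⟩ := hνsplit
  obtain ⟨τ, hτl, hτr, hτμ⟩ := hμsplit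
  let eA : A ≃ₗ[k] Module.Dual k A := LinearEquiv.ofBijective φ hφbij
  let eB : B ≃ₗ[k] Module.Dual k B := LinearEquiv.ofBijective ψ hψbij
  have hA3 : ∀ a x y : A, eA (a * x) y = eA x (y * a) := fun a x y => hφ3 a x y
  have hA4 : ∀ a x y : A, eA (x * a) y = eA x (a * y) := fun a x y => hφ4 a x y
  have hB3 : ∀ b x y : B, eB (b * x) y = eB x (y * b) := fun b x y => hψ3 b x y
  have hB4 : ∀ b x y : B, eB (x * b) y = eB x (b * y) := fun b x y => hψ4 b x y
  have trA : ∀ x y : A, eA 1 (x * y) = eA 1 (y * x) := SS.e_tr eA hA3 hA4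
  have trB : ∀ x y : B, eB 1 (x * y) = eB 1 (y * x) := SS.e_tr eB hB3 hB4
  obtain ⟨n, pA, gA, hdbA⟩ := SS.exists_dual_basis A P
  obtain ⟨m, xB, hOB, hdbB⟩ := SS.exists_dual_basis Bᵐᵒᵖ P
  -- the new `ν'` is the evaluation map on `P ⊗_B Q'`, `Q' = Hom_A(P, A)`
  let ν' : Bal B P (P →ₗ[A] A) →+ A :=
    Bal.liftFun B (fun p g => g p)
      (fun p p' g => map_add g p p')
      (fun p g g' => rfl)
      (fun p b g => rfl)
  have hν't : ∀ (p : P) (g : P →ₗ[A] A), ν' (Bal.tmul B p g) = g p :=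
    fun p g => Bal.liftFun_tmul B _ _ _ _ p g
  have hν'l : ∀ (a : A) (x : Bal B P (P →ₗ[A] A)), ν' (a • x) = a * ν' x := by
    intro a x
    refine Bal.induction_on B (C := fun z => ν' (a • z) = a * ν' z) x ?_ ?_ ?_
    · beta_reduce
      rw [smul_zero, map_zero, mul_zero]
    · intro p g
      beta_reduce
      rw [Bal.lsmul_tmul, hν't, hν't, g.map_smul, smul_eq_mul]
    · intro x y hx hy
      rw [smul_add, map_add, map_add, hx, hy, mul_add]
  have hν'r : ∀ (a : A) (x : Bal B P (P →ₗ[A] A)), ν' (op a • x) = ν' x * a := by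
    intro a x
    refine Bal.induction_on B (C := fun z => ν' (op a • z) = ν' z * a) x ?_ ?_ ?_
    · beta_reduce
      rw [smul_zero, map_zero, zero_mul]
    · intro p g
      beta_reduce
      rw [Bal.rsmul_tmul, hν't, hν't, SS.opSmul_apply]
    · intro x y hx hy
      rw [smul_add, map_add, map_add, hx, hy, add_mul]
  -- transport the splitting of `ν` along `Θ : Q → Q'`
  let Θ : Q → (P →ₗ[A] A) := fun q =>
    { toFun := fun p => ν (Bal.tmul B p q)
      map_add' := fun p p' => by
        show ν (Bal.tmul B (p + p') q) = ν (Bal.tmul B p q) + ν (Bal.tmul B p' q)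
        rw [Bal.add_tmul, map_add]
      map_smul' := fun a p => by
        show ν (Bal.tmul B (a • p) q) = a • ν (Bal.tmul B p q)
        rw [← Bal.lsmul_tmul, hνl, smul_eq_mul] }
  have Θb : ∀ (b : B) (q : Q), Θ (b • q) = b • Θ q := by
    intro b q; ext p
    show ν (Bal.tmul B p (b • q)) = ν (Bal.tmul B (op b • p) q)
    rw [Bal.op_smul_tmul]
  have Θop : ∀ (a : A) (q : Q), Θ (op a • q) = op a • Θ q := by
    intro a q; ext p
    show ν (Bal.tmul B p (op a • q)) = ν (Bal.tmul B p q) * a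
    rw [← Bal.rsmul_tmul, hνr]
  have Θadd : ∀ q q', Θ (q + q') = Θ q + Θ q' := by
    intro q q'; ext p
    show ν (Bal.tmul B p (q + q')) = ν (Bal.tmul B p q) + ν (Bal.tmul B p q')
    rw [Bal.tmul_add, map_add]
  let mapΘ : Bal B P Q →+ Bal B P (P →ₗ[A] A) :=
    Bal.liftFun B (fun p q => Bal.tmul B p (Θ q))
      (fun p p' q => Bal.add_tmul B p p' (Θ q))
      (fun p q q' => by beta_reduce; rw [Θadd, Bal.tmul_add])
      (fun p b q => by beta_reduce; rw [Bal.op_smul_tmul, Θb])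
  have mapΘt : ∀ p q, mapΘ (Bal.tmul B p q) = Bal.tmul B p (Θ q) :=
    fun p q => Bal.liftFun_tmul B _ _ _ _ p q
  have mapΘl : ∀ (a : A) x, mapΘ (a • x) = a • mapΘ x := by
    intro a x
    refine Bal.induction_on B (C := fun z => mapΘ (a • z) = a • mapΘ z) x ?_ ?_ ?_
    · beta_reduce
      rw [smul_zero, map_zero, smul_zero]
    · intro p q; beta_reduce; rw [Bal.lsmul_tmul, mapΘt, mapΘt, Bal.lsmul_tmul]
    · intro x y hx hy; beta_reduce; rw [smul_add, map_add, map_add, hx, hy, smul_add]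
  have mapΘr : ∀ (a : A) x, mapΘ (op a • x) = op a • mapΘ x := by
    intro a x
    refine Bal.induction_on B (C := fun z => mapΘ (op a • z) = op a • mapΘ z) x ?_ ?_ ?_
    · beta_reduce
      rw [smul_zero, map_zero, smul_zero]
    · intro p q; beta_reduce; rw [Bal.rsmul_tmul, mapΘt, Θop, ← Bal.rsmul_tmul, mapΘt]
    · intro x y hx hy; beta_reduce; rw [smul_add, map_add, map_add, hx, hy, smul_add]
  have ν'mapΘ : ∀ x, ν' (mapΘ x) = ν x := by
    intro x
    refine Bal.induction_on B (C := fun z => ν' (mapΘ z) = ν z) x ?_ ?_ ?_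
    · beta_reduce
      rw [map_zero, map_zero, map_zero]
    · intro p q; beta_reduce; rw [mapΘt, hν't]; rfl
    · intro x y hx hy; beta_reduce; rw [map_add, map_add, map_add, hx, hy]
  let σ' : A →+ Bal B P (P →ₗ[A] A) := mapΘ.comp σ
  have hσ'1 : ∀ a c : A, σ' (a * c) = a • σ' c := by
    intro a c; show mapΘ (σ (a * c)) = a • mapΘ (σ c); rw [hσl, mapΘl]
  have hσ'2 : ∀ a c : A, σ' (c * a) = op a • σ' c := by
    intro a c; show mapΘ (σ (c * a)) = op a • mapΘ (σ c); rw [hσr, mapΘr]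
  have hσ'3 : ∀ a : A, ν' (σ' a) = a := by
    intro a; show ν' (mapΘ (σ a)) = a; rw [ν'mapΘ, hσν]
  have hν'surj : Function.Surjective ν' := fun a => ⟨σ' a, hσ'3 a⟩
  -- `μ'` from the symmetric structures
  have hμ'l : ∀ (b : B) (y : Bal A (P →ₗ[A] A) P),
      SS.muMap eA eB trA (b • y) = b * SS.muMap eA eB trA y := by
    intro b y
    refine Bal.induction_on A
      (C := fun z => SS.muMap eA eB trA (b • z) = b * SS.muMap eA eB trA z) y ?_ ?_ ?_
    · beta_reduce
      rw [smul_zero, map_zero, mul_zero]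
    · intro g p; beta_reduce; rw [Bal.lsmul_tmul, SS.muMap_bsmul_tmul eA eB trA hB3]
    · intro x y hx hy; beta_reduce; rw [smul_add, map_add, map_add, hx, hy, mul_add]
  have hμ'r : ∀ (b : B) (y : Bal A (P →ₗ[A] A) P),
      SS.muMap eA eB trA (op b • y) = SS.muMap eA eB trA y * b := by
    intro b y
    refine Bal.induction_on A
      (C := fun z => SS.muMap eA eB trA (op b • z) = SS.muMap eA eB trA z * b) y ?_ ?_ ?_
    · beta_reduce
      rw [smul_zero, map_zero, zero_mul]
    · intro g p; beta_reduce; rw [Bal.rsmul_tmul, SS.muMap_opsmul_tmul eA eB trA hB4]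
    · intro x y hx hy; beta_reduce; rw [smul_add, map_add, map_add, hx, hy, add_mul]
  -- the map `Θ' : Q → Q'` transporting the splitting of `μ`
  have tmul_ksmul : ∀ (c : k) (q : Q) (x : P), Bal.tmul A q (c • x) = c • Bal.tmul A q x := by
    intro c q x
    rw [← algebraMap_smul (R := k) A c x, ← Bal.op_smul_tmul, Bal.lsmul_tmul]
    congr 1
    rw [show op (algebraMap k A c) = algebraMap k Aᵐᵒᵖ c from rfl,
      algebraMap_smul (R := k) Aᵐᵒᵖ c q]
  have mu_ksmul : ∀ (c : k) (y : Bal A Q P), μ (c • y) = c • μ y := by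
    intro c y
    refine Bal.induction_on A (C := fun z => μ (c • z) = c • μ z) y ?_ ?_ ?_
    · beta_reduce
      rw [smul_zero, map_zero, smul_zero]
    · intro q x
      beta_reduce
      rw [Bal.lsmul_tmul, ← algebraMap_smul (R := k) B c q, ← Bal.lsmul_tmul, hμl,
        Algebra.smul_def]
    · intro x y hx hy; beta_reduce; rw [smul_add, map_add, map_add, hx, hy, smul_add]
  let Fq : Q → (P →ₗ[k] B) := fun q =>
    { toFun := fun x => μ (Bal.tmul A q x)
      map_add' := fun x y => by
        show μ (Bal.tmul A q (x + y)) = μ (Bal.tmul A q x) + μ (Bal.tmul A q y)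
        rw [Bal.tmul_add, map_add]
      map_smul' := fun c x => by
        show μ (Bal.tmul A q (c • x)) = c • μ (Bal.tmul A q x)
        rw [tmul_ksmul, mu_ksmul] }
  have hFqop : ∀ (q : Q) (b' : B) (x : P), Fq q (op b' • x) = Fq q x * b' := by
    intro q b' x
    show μ (Bal.tmul A q (op b' • x)) = μ (Bal.tmul A q x) * b'
    rw [← Bal.rsmul_tmul, hμr]
  let ΘP : Q → (P →ₗ[A] A) := fun q => SS.Dz eA eB hA3 (Fq q)
  have ΘPb : ∀ (b : B) (q : Q), ΘP (b • q) = b • ΘP q := by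
    intro b q
    refine SS.Dz_bsmul eA eB hA3 trB (Fq q) (Fq (b • q)) (hFqop q) b ?_
    intro x
    show μ (Bal.tmul A (b • q) x) = b * μ (Bal.tmul A q x)
    rw [← Bal.lsmul_tmul, hμl]
  have ΘPop : ∀ (a : A) (q : Q), ΘP (op a • q) = op a • ΘP q := by
    intro a q
    refine SS.Dz_opsmul eA eB hA3 hA4 (Fq q) (Fq (op a • q)) a ?_
    intro x
    show μ (Bal.tmul A (op a • q) x) = μ (Bal.tmul A q (a • x))
    rw [Bal.op_smul_tmul]
  have ΘPadd : ∀ q q', ΘP (q + q') = ΘP q + ΘP q' := by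
    intro q q'
    refine SS.Dz_add eA eB hA3 (Fq q) (Fq q') (Fq (q + q')) ?_
    intro x
    show μ (Bal.tmul A (q + q') x) = μ (Bal.tmul A q x) + μ (Bal.tmul A q' x)
    rw [Bal.add_tmul, map_add]
  have ΘPkey : ∀ (q : Q) (p : P),
      SS.muMap eA eB trA (Bal.tmul A (ΘP q) p) = μ (Bal.tmul A q p) := by
    intro q p
    rw [SS.muMap_tmul_Dz eA eB hA3 hB4 trA (Fq q) (hFqop q) p]
    rfl
  let mapΘP : Bal A Q P →+ Bal A (P →ₗ[A] A) P :=
    Bal.liftFun A (fun q p => Bal.tmul A (ΘP q) p)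
      (fun q q' p => by beta_reduce; rw [ΘPadd, Bal.add_tmul])
      (fun q p p' => Bal.tmul_add A _ p p')
      (fun q a p => by beta_reduce; rw [ΘPop, Bal.op_smul_tmul])
  have mapΘPt : ∀ q p, mapΘP (Bal.tmul A q p) = Bal.tmul A (ΘP q) p :=
    fun q p => Bal.liftFun_tmul A _ _ _ _ q p
  have mapΘPl : ∀ (b : B) y, mapΘP (b • y) = b • mapΘP y := by
    intro b y
    refine Bal.induction_on A (C := fun z => mapΘP (b • z) = b • mapΘP z) y ?_ ?_ ?_
    · beta_reduce
      rw [smul_zero, map_zero, smul_zero]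
    · intro q p; beta_reduce; rw [Bal.lsmul_tmul, mapΘPt, ΘPb, ← Bal.lsmul_tmul, mapΘPt]
    · intro x y hx hy; beta_reduce; rw [smul_add, map_add, map_add, hx, hy, smul_add]
  have mapΘPr : ∀ (b : B) y, mapΘP (op b • y) = op b • mapΘP y := by
    intro b y
    refine Bal.induction_on A (C := fun z => mapΘP (op b • z) = op b • mapΘP z) y ?_ ?_ ?_
    · beta_reduce
      rw [smul_zero, map_zero, smul_zero]
    · intro q p; beta_reduce; rw [Bal.rsmul_tmul, mapΘPt, ← Bal.rsmul_tmul, mapΘPt]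
    · intro x y hx hy; beta_reduce; rw [smul_add, map_add, map_add, hx, hy, smul_add]
  have μ'mapΘP : ∀ y, SS.muMap eA eB trA (mapΘP y) = μ y := by
    intro y
    refine Bal.induction_on A (C := fun z => SS.muMap eA eB trA (mapΘP z) = μ z) y ?_ ?_ ?_
    · beta_reduce
      rw [map_zero, map_zero, map_zero]
    · intro q p; beta_reduce; rw [mapΘPt, ΘPkey]
    · intro x y hx hy; beta_reduce; rw [map_add, map_add, map_add, hx, hy]
  let τ' : B →+ Bal A (P →ₗ[A] A) P := mapΘP.comp τ
  have hτ'1 : ∀ b c : B, τ' (b * c) = b • τ' c := by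
    intro b c; show mapΘP (τ (b * c)) = b • mapΘP (τ c); rw [hτl, mapΘPl]
  have hτ'2 : ∀ b c : B, τ' (c * b) = op b • τ' c := by
    intro b c; show mapΘP (τ (c * b)) = op b • mapΘP (τ c); rw [hτr, mapΘPr]
  have hτ'3 : ∀ b : B, SS.muMap eA eB trA (τ' b) = b := by
    intro b; show SS.muMap eA eB trA (mapΘP (τ b)) = b; rw [μ'mapΘP, hτμ]
  have hμ'surj : Function.Surjective (SS.muMap eA eB trA) := fun b => ⟨τ' b, hτ'3 b⟩
  -- finiteness and projectivity of `Q'`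
  let uA : (P →ₗ[A] A) →ₗ[Aᵐᵒᵖ] (Fin n → Aᵐᵒᵖ) :=
    { toFun := fun g i => op (g (pA i))
      map_add' := fun g g' => by
        ext i
        show op ((g + g') (pA i)) = op (g (pA i)) + op (g' (pA i))
        rw [LinearMap.add_apply, op_add]
      map_smul' := fun a g => by
        ext i
        show op ((a • g) (pA i)) = a * op (g (pA i))
        rw [LinearMap.smul_apply, MulOpposite.smul_eq_mul_unop, op_mul, op_unop]
      }
  let vA : (Fin n → Aᵐᵒᵖ) →ₗ[Aᵐᵒᵖ] (P →ₗ[A] A) :=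
    { toFun := fun c => ∑ i, c i • gA i
      map_add' := fun c c' => by
        simp only [Pi.add_apply, add_smul, Finset.sum_add_distrib]
      map_smul' := fun a c => by
        simp only [Pi.smul_apply, smul_eq_mul, mul_smul, RingHom.id_apply, Finset.smul_sum] }
  have hvuA : ∀ g : P →ₗ[A] A, vA (uA g) = g := by
    intro g
    show ∑ i, op (g (pA i)) • gA i = g
    exact SS.cond2nu pA gA hdbA g
  have finQA : Module.Finite Aᵐᵒᵖ (P →ₗ[A] A) :=
    Module.Finite.of_surjective vA (fun g => ⟨uA g, hvuA g⟩)
  have projQA : Module.Projective Aᵐᵒᵖ (P →ₗ[A] A) :=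
    Module.Projective.of_split uA vA (LinearMap.ext hvuA)
  let qB : Fin m → (P →ₗ[A] A) := fun j => SS.Dz eA eB hA3 (SS.bl (k := k) (hOB j))
  let uB : (P →ₗ[A] A) →ₗ[B] (Fin m → B) :=
    { toFun := fun g j => SS.muMap eA eB trA (Bal.tmul A g (xB j))
      map_add' := fun g g' => by
        ext j
        show SS.muMap eA eB trA (Bal.tmul A (g + g') (xB j)) = _ + _
        rw [Bal.add_tmul, map_add]
      map_smul' := fun b g => by
        ext j
        show SS.muMap eA eB trA (Bal.tmul A (b • g) (xB j))
          = b * SS.muMap eA eB trA (Bal.tmul A g (xB j))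
        rw [SS.muMap_bsmul_tmul eA eB trA hB3] }
  let vB : (Fin m → B) →ₗ[B] (P →ₗ[A] A) :=
    { toFun := fun c => ∑ j, c j • qB j
      map_add' := fun c c' => by
        simp only [Pi.add_apply, add_smul, Finset.sum_add_distrib]
      map_smul' := fun b c => by
        simp only [Pi.smul_apply, smul_eq_mul, mul_smul, RingHom.id_apply, Finset.smul_sum] }
  have hvuB : ∀ g : P →ₗ[A] A, vB (uB g) = g := by
    intro g
    show ∑ j, SS.muMap eA eB trA (Bal.tmul A g (xB j)) • qB j = g
    exact SS.cond1mu eA eB hA3 hB4 trA trB xB hOB hdbB g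
  have finQB : Module.Finite B (P →ₗ[A] A) :=
    Module.Finite.of_surjective vB (fun g => ⟨uB g, hvuB g⟩)
  have projQB : Module.Projective B (P →ₗ[A] A) :=
    Module.Projective.of_split uB vB (LinearMap.ext hvuB)
  refine ⟨P, inferInstance, inferInstance, inferInstance, inferInstance, inferInstance,
    inferInstance, inferInstance,
    (P →ₗ[A] A), inferInstance, SS.moduleB, inferInstance, SS.smulCommBA, inferInstance,
    SS.towerkB, inferInstance,
    inferInstance, inferInstance, inferInstance, inferInstance,
    finQB, projQB, finQA, projQA,
    ν', hν'l, hν'r, hν'surj, ⟨σ', hσ'1, hσ'2, hσ'3⟩,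
    SS.muMap eA eB trA, hμ'l, hμ'r, hμ'surj, ⟨τ', hτ'1, hτ'2, hτ'3⟩,
    ⟨n, gA, pA, ?_, ?_⟩, ⟨m, xB, qB, ?_, ?_⟩⟩
  · intro p
    simp only [hν't]
    exact hdbA p
  · intro g
    simp only [hν't]
    exact SS.cond2nu pA gA hdbA g
  · intro g
    exact SS.cond1mu eA eB hA3 hB4 trA trB xB hOB hdbB g
  · intro p
    have h2 : ∀ j : Fin m,
        op (SS.muMap eA eB trA (Bal.tmul A (qB j) p)) • xB j = hOB j p • xB j := by
      intro j
      rw [SS.muMap_tmul_Dz eA eB hA3 hB4 trA (SS.bl (k := k) (hOB j))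
        (SS.bl_opsmul (hOB j)) p, SS.bl_apply, op_unop]
    rw [Finset.sum_congr rfl fun j _ => h2 j]
    exact hdbB p
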